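/- Let F be a finitely generated free ℤ-module with a symmetric bilinear form B : F × F → ℤ that is unimodular (the induced map F → Hom(F, ℤ) is an isomorphism). If t ∈ F satisfies B(t, t) = 0 and t is primitive (i.e., t = d·x implies d = ±1 for d ∈ ℤ, x ∈ F), then there exists s ∈ F with B(s, t) = 1. -/

import Mathlib

/-- A unimodular symmetric bilinear form on a finitely generated free ℤ-module:
if `t` is isotropic and primitive, then some `s` pairs with `t` to `1`. -/
theorem stmt_0 (F : Type*) [AddCommGroup F] [Module ℤ F]
    [Module.Free ℤ F] [Module.Finite ℤ F]
    (B : F →ₗ[ℤ] F →ₗ[ℤ] ℤ)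
    (hsymm : ∀ x y : F, B x y = B y x)
    (huni : Function.Bijective B)
    (t : F)
    (hiso : B t t = 0)
    (hprim : ∀ (d : ℤ) (x : F), t = d • x → d = 1 ∨ d = -1) :
    ∃ s : F, B s t = 1 := by
  classical
  let b := Module.Free.chooseBasis ℤ F
  let ev : (F →ₗ[ℤ] ℤ) →ₗ[ℤ] ℤ := LinearMap.applyₗ t
  let I : Ideal ℤ := LinearMap.range ev
  obtain ⟨g, hg⟩ := IsPrincipalIdealRing.principal I
  have hdvd : ∀ i, g ∣ b.repr t i := by
    intro i
    have hmem : b.repr t i ∈ I := ⟨b.coord i, by simp [ev]⟩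
    rwa [hg, Ideal.submodule_span_eq, Ideal.mem_span_singleton] at hmem
  set x : F := ∑ i, ((b.repr t i) / g) • b i with hx
  have htx : t = g • x := by
    rw [hx, ← Int.cast_smul_eq_zsmul ℤ g, Int.cast_id, Finset.smul_sum]
    conv_lhs => rw [← b.sum_repr t]
    refine Finset.sum_congr rfl fun i _ => ?_
    have key : (b.repr t i) • b i = g • ((b.repr t i / g) • b i) := by
      rw [smul_smul, Int.mul_ediv_cancel' (hdvd i)]
    convert key using 2 <;> congr 1 <;> ext n y <;> exact int_smul_eq_zsmul _ n y
  have hgI : g ∈ I := by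
    rw [hg]; exact Submodule.mem_span_singleton_self g
  obtain ⟨f, hf⟩ := hgI
  have hft : f t = g := hf
  rcases hprim g x htx with h1 | h1
  · obtain ⟨s, hs⟩ := huni.surjective f
    exact ⟨s, by rw [hs, hft, h1]⟩
  · obtain ⟨s, hs⟩ := huni.surjective (-f)
    refine ⟨s, ?_⟩
    rw [hs]
    simp [hft, h1]
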